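/- Let θ, x, z solve x' = cos θ, z' = sin θ, z > 0, with θ'(s) = ((m−1) cos θ(s) + n)/z(s), θ(0) = 0, n ≥ 0, m ≥ n+1 > 1, and n + m − 1 > 0. Then cos θ(s) ≠ −1 for all s, so −π < θ(s) < π on the whole domain; moreover z is increasing for s > 0 and the maximal interval of existence is all of ℝ. -/

import Mathlib

open Real Set NNReal

noncomputable def pvf (m n δ : ℝ) : ℝ × ℝ × ℝ → ℝ × ℝ × ℝ :=
  fun p => (((m - 1) * Real.cos p.1 + n) * (max δ p.2.2)⁻¹, Real.cos p.1, Real.sin p.1)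

lemma lipschitzWith_one_cos : LipschitzWith 1 Real.cos := by
  apply lipschitzWith_of_nnnorm_deriv_le Real.differentiable_cos
  intro x
  rw [Real.deriv_cos]
  simp only [← NNReal.coe_le_coe, coe_nnnorm, Real.norm_eq_abs, NNReal.coe_one]
  simpa using Real.abs_sin_le_one x

lemma lipschitzWith_one_sin : LipschitzWith 1 Real.sin := by
  apply lipschitzWith_of_nnnorm_deriv_le Real.differentiable_sin
  intro x
  rw [Real.deriv_sin]
  simp only [← NNReal.coe_le_coe, coe_nnnorm, Real.norm_eq_abs, NNReal.coe_one]
  simpa using Real.abs_cos_le_one x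

lemma abs_cos_sub_cos_le (a b : ℝ) : |Real.cos a - Real.cos b| ≤ |a - b| := by
  simpa [Real.dist_eq] using lipschitzWith_one_cos.dist_le_mul a b

lemma abs_sin_sub_sin_le (a b : ℝ) : |Real.sin a - Real.sin b| ≤ |a - b| := by
  simpa [Real.dist_eq] using lipschitzWith_one_sin.dist_le_mul a b

lemma abs_invmax_le (δ w : ℝ) (hδ : 0 < δ) : |(max δ w)⁻¹| ≤ δ⁻¹ := by
  have h1 : 0 < max δ w := lt_max_of_lt_left hδ
  rw [abs_of_pos (inv_pos.mpr h1)]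
  exact inv_anti₀ hδ (le_max_left _ _)

lemma abs_invmax_sub_le (δ w w' : ℝ) (hδ : 0 < δ) :
    |(max δ w)⁻¹ - (max δ w')⁻¹| ≤ δ⁻¹ * δ⁻¹ * |w - w'| := by
  have h1 : δ ≤ max δ w := le_max_left _ _
  have h2 : δ ≤ max δ w' := le_max_left _ _
  have h1' : (0:ℝ) < max δ w := lt_of_lt_of_le hδ h1
  have h2' : (0:ℝ) < max δ w' := lt_of_lt_of_le hδ h2
  have key : (max δ w)⁻¹ - (max δ w')⁻¹ = (max δ w' - max δ w) / (max δ w * max δ w') := by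
    field_simp
  rw [key, abs_div, abs_of_pos (mul_pos h1' h2'), div_le_iff₀ (mul_pos h1' h2')]
  have hmm : |max δ w' - max δ w| ≤ |w - w'| := by
    rw [max_comm δ w', max_comm δ w, abs_sub_comm w w']
    exact abs_max_sub_max_le_abs _ _ _
  have e1 : (1:ℝ) ≤ δ⁻¹ * max δ w := by
    rw [← div_eq_inv_mul]; exact (one_le_div hδ).mpr h1
  have e2 : (1:ℝ) ≤ δ⁻¹ * max δ w' := by
    rw [← div_eq_inv_mul]; exact (one_le_div hδ).mpr h2
  have e3 : |w - w'| * 1 ≤ |w - w'| * ((δ⁻¹ * max δ w) * (δ⁻¹ * max δ w')) :=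
    mul_le_mul_of_nonneg_left (by nlinarith) (abs_nonneg _)
  calc |max δ w' - max δ w| ≤ |w - w'| := hmm
    _ = |w - w'| * 1 := by ring
    _ ≤ |w - w'| * ((δ⁻¹ * max δ w) * (δ⁻¹ * max δ w')) := e3
    _ = δ⁻¹ * δ⁻¹ * |w - w'| * (max δ w * max δ w') := by ring

lemma pvf_lipschitz (m n δ : ℝ) (hδ : 0 < δ) (hm1 : 1 ≤ m) (hn : 0 ≤ n) :
    ∃ K : ℝ≥0, LipschitzWith K (pvf m n δ) := by
  set Kr : ℝ := max ((m - 1) * δ⁻¹ + ((m - 1) + n) * (δ⁻¹ * δ⁻¹)) 1 with hKr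
  have hKr0 : (0:ℝ) ≤ Kr := le_trans zero_le_one (le_max_right _ _)
  refine ⟨Kr.toNNReal, LipschitzWith.of_dist_le_mul fun p q => ?_⟩
  rw [Real.coe_toNNReal _ hKr0]
  have hd1 : dist p.1 q.1 ≤ dist p q := by rw [Prod.dist_eq]; exact le_max_left _ _
  have hd3 : dist p.2.2 q.2.2 ≤ dist p q := by
    rw [Prod.dist_eq]
    refine le_trans ?_ (le_max_right _ _)
    rw [Prod.dist_eq]
    exact le_max_right _ _
  have hdnn : (0:ℝ) ≤ dist p q := dist_nonneg
  have habs1 : |p.1 - q.1| ≤ dist p q := by rwa [Real.dist_eq] at hd1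
  have habs3 : |p.2.2 - q.2.2| ≤ dist p q := by rwa [Real.dist_eq] at hd3
  have hinv : |(max δ p.2.2)⁻¹| ≤ δ⁻¹ := abs_invmax_le δ p.2.2 hδ
  have hg1 : |Real.cos q.1 * (m - 1) + n| ≤ (m - 1) + n := by
    have := Real.abs_cos_le_one q.1
    have h := abs_mul (Real.cos q.1) (m - 1)
    rw [abs_le]
    constructor <;> nlinarith [Real.neg_one_le_cos q.1, Real.cos_le_one q.1]
  -- first component distance
  have hcomp1 : dist ((pvf m n δ p).1) ((pvf m n δ q).1) ≤
      ((m - 1) * δ⁻¹ + ((m - 1) + n) * (δ⁻¹ * δ⁻¹)) * dist p q := by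
    rw [Real.dist_eq]
    have key : (pvf m n δ p).1 - (pvf m n δ q).1 =
        ((m - 1) * (Real.cos p.1 - Real.cos q.1)) * (max δ p.2.2)⁻¹ +
        ((m - 1) * Real.cos q.1 + n) * ((max δ p.2.2)⁻¹ - (max δ q.2.2)⁻¹) := by
      simp only [pvf]; ring
    rw [key]
    calc |((m - 1) * (Real.cos p.1 - Real.cos q.1)) * (max δ p.2.2)⁻¹ +
        ((m - 1) * Real.cos q.1 + n) * ((max δ p.2.2)⁻¹ - (max δ q.2.2)⁻¹)|
        ≤ |((m - 1) * (Real.cos p.1 - Real.cos q.1)) * (max δ p.2.2)⁻¹| +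
          |((m - 1) * Real.cos q.1 + n) * ((max δ p.2.2)⁻¹ - (max δ q.2.2)⁻¹)| := abs_add_le _ _
      _ ≤ ((m - 1) * |p.1 - q.1|) * δ⁻¹ +
          ((m - 1) + n) * (δ⁻¹ * δ⁻¹ * |p.2.2 - q.2.2|) := by
          apply add_le_add
          · rw [abs_mul, abs_mul]
            apply mul_le_mul _ hinv (abs_nonneg _)
              (by nlinarith [abs_nonneg (p.1 - q.1)])
            rw [abs_of_nonneg (by linarith : (0:ℝ) ≤ m - 1)]
            exact mul_le_mul_of_nonneg_left (_root_.abs_cos_sub_cos_le _ _) (by linarith)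
          · rw [abs_mul]
            apply mul_le_mul _ (abs_invmax_sub_le δ _ _ hδ) (abs_nonneg _) (by linarith)
            calc |(m - 1) * Real.cos q.1 + n| = |Real.cos q.1 * (m - 1) + n| := by ring_nf
              _ ≤ (m - 1) + n := hg1
      _ ≤ ((m - 1) * dist p q) * δ⁻¹ + ((m - 1) + n) * (δ⁻¹ * δ⁻¹ * dist p q) := by
          apply add_le_add
          · exact mul_le_mul_of_nonneg_right
              (mul_le_mul_of_nonneg_left habs1 (by linarith)) (by positivity)
          · exact mul_le_mul_of_nonneg_left
              (mul_le_mul_of_nonneg_left habs3 (by positivity)) (by linarith)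
      _ = ((m - 1) * δ⁻¹ + ((m - 1) + n) * (δ⁻¹ * δ⁻¹)) * dist p q := by ring
  have hcomp2 : dist ((pvf m n δ p).2.1) ((pvf m n δ q).2.1) ≤ dist p q := by
    simp only [pvf, Real.dist_eq]
    exact le_trans (_root_.abs_cos_sub_cos_le _ _) habs1
  have hcomp3 : dist ((pvf m n δ p).2.2) ((pvf m n δ q).2.2) ≤ dist p q := by
    simp only [pvf, Real.dist_eq]
    exact le_trans (_root_.abs_sin_sub_sin_le _ _) habs1
  have hKge : ((m - 1) * δ⁻¹ + ((m - 1) + n) * (δ⁻¹ * δ⁻¹)) ≤ Kr := le_max_left _ _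
  have hKge1 : (1:ℝ) ≤ Kr := le_max_right _ _
  rw [Prod.dist_eq]
  apply max_le
  · exact le_trans hcomp1 (mul_le_mul_of_nonneg_right hKge hdnn)
  · rw [Prod.dist_eq]
    apply max_le
    · calc dist ((pvf m n δ p).2.1) ((pvf m n δ q).2.1) ≤ dist p q := hcomp2
        _ = 1 * dist p q := (one_mul _).symm
        _ ≤ Kr * dist p q := mul_le_mul_of_nonneg_right hKge1 hdnn
    · calc dist ((pvf m n δ p).2.2) ((pvf m n δ q).2.2) ≤ dist p q := hcomp3
        _ = 1 * dist p q := (one_mul _).symm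
        _ ≤ Kr * dist p q := mul_le_mul_of_nonneg_right hKge1 hdnn

lemma pvf_norm_le (m n δ : ℝ) (hδ : 0 < δ) (hm1 : 1 ≤ m) (hn : 0 ≤ n) (p : ℝ × ℝ × ℝ) :
    ‖pvf m n δ p‖ ≤ max (((m - 1) + n) * δ⁻¹) 1 := by
  rw [Prod.norm_def, Prod.norm_def]
  have h1 : ‖(pvf m n δ p).1‖ ≤ ((m - 1) + n) * δ⁻¹ := by
    simp only [pvf, Real.norm_eq_abs]
    rw [abs_mul]
    apply mul_le_mul _ (abs_invmax_le δ _ hδ) (abs_nonneg _) (by linarith)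
    rw [abs_le]
    constructor <;> nlinarith [Real.neg_one_le_cos p.1, Real.cos_le_one p.1]
  apply max_le
  · exact le_trans h1 (le_max_left _ _)
  · apply max_le <;> simp only [pvf, Real.norm_eq_abs]
    · exact le_trans (Real.abs_cos_le_one _) (le_max_right _ _)
    · exact le_trans (Real.abs_sin_le_one _) (le_max_right _ _)

lemma pvf_exists (m n δ : ℝ) (hδ : 0 < δ) (hm1 : 1 ≤ m) (hn : 0 ≤ n) (t₂ T : ℝ) (hT : 0 < T)
    (y₀ : ℝ × ℝ × ℝ) :
    ∃ f : ℝ → ℝ × ℝ × ℝ, f t₂ = y₀ ∧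
      ∀ t ∈ Ioo (t₂ - T) (t₂ + T), HasDerivAt f (pvf m n δ (f t)) t := by
  obtain ⟨K, hK⟩ := pvf_lipschitz m n δ hδ hm1 hn
  set C : ℝ := max (((m - 1) + n) * δ⁻¹) 1 with hC_def
  have hC : (0:ℝ) ≤ C := le_trans zero_le_one (le_max_right _ _)
  have hpl : IsPicardLindelof (fun _ => pvf m n δ) (tmin := t₂ - T) (tmax := t₂ + T)
      ⟨t₂, by constructor <;> linarith⟩ y₀ (C * T).toNNReal 0 C.toNNReal K := by
    apply IsPicardLindelof.of_time_independent
    · intro x _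
      rw [Real.coe_toNNReal _ hC]
      exact pvf_norm_le m n δ hδ hm1 hn x
    · exact hK.lipschitzOnWith
    · have : max (t₂ + T - t₂) (t₂ - (t₂ - T)) = T := by
        rw [show t₂ + T - t₂ = T by ring, show t₂ - (t₂ - T) = T by ring, max_self]
      rw [Real.coe_toNNReal _ hC, Real.coe_toNNReal _ (mul_nonneg hC hT.le), NNReal.coe_zero,
        sub_zero]
      show C * max (t₂ + T - t₂) (t₂ - (t₂ - T)) ≤ C * T
      rw [this]
  obtain ⟨f, hf0, hf⟩ := hpl.exists_eq_forall_mem_Icc_hasDerivWithinAt₀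
  exact ⟨f, hf0, fun t ht => (hf t (Ioo_subset_Icc_self ht)).hasDerivAt (Icc_mem_nhds ht.1 ht.2)⟩

lemma hasDerivAt_fst3 {f : ℝ → ℝ × ℝ × ℝ} {v : ℝ × ℝ × ℝ} {s : ℝ} (h : HasDerivAt f v s) :
    HasDerivAt (fun u => (f u).1) v.1 s := by
  simpa using h.hasFDerivAt.fst.hasDerivAt

lemma hasDerivAt_snd3 {f : ℝ → ℝ × ℝ × ℝ} {v : ℝ × ℝ × ℝ} {s : ℝ} (h : HasDerivAt f v s) :
    HasDerivAt (fun u => (f u).2.1) v.2.1 s := by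
  simpa using h.hasFDerivAt.snd.fst.hasDerivAt

lemma hasDerivAt_trd3 {f : ℝ → ℝ × ℝ × ℝ} {v : ℝ × ℝ × ℝ} {s : ℝ} (h : HasDerivAt f v s) :
    HasDerivAt (fun u => (f u).2.2) v.2.2 s := by
  simpa using h.hasFDerivAt.snd.snd.hasDerivAt

lemma ordConnected_union {s t : Set ℝ} (hs : s.OrdConnected) (ht : t.OrdConnected)
    {w : ℝ} (hws : w ∈ s) (hwt : w ∈ t) : (s ∪ t).OrdConnected := by
  constructor
  rintro u (hu | hu) v (hv | hv) y hy
  · exact Or.inl (hs.out hu hv hy)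
  · rcases le_total y w with h | h
    · exact Or.inl (hs.out hu hws ⟨hy.1, h⟩)
    · exact Or.inr (ht.out hwt hv ⟨h, hy.2⟩)
  · rcases le_total y w with h | h
    · exact Or.inr (ht.out hu hwt ⟨hy.1, h⟩)
    · exact Or.inl (hs.out hws hv ⟨h, hy.2⟩)
  · exact Or.inr (ht.out hu hv hy)

/-- Case `n + m - 1 > 0`, `m ≥ n + 1 > 1`: along the generating curve of a
parabolic surface with `κ₁ = m κ₂ + n` and `θ(0) = 0`, one has
`cos θ(s) ≠ -1`, so `-π < θ(s) < π`; moreover `z` is increasing for `s > 0`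
and the maximal interval of existence is all of `ℝ`. -/
theorem stmt8 (m n : ℝ) (θ x z θd : ℝ → ℝ) (I : Set ℝ)
    (hI : I.OrdConnected) (hIopen : IsOpen I) (hI0 : (0 : ℝ) ∈ I)
    (hx : ∀ s ∈ I, HasDerivAt x (Real.cos (θ s)) s)
    (hz : ∀ s ∈ I, HasDerivAt z (Real.sin (θ s)) s)
    (hθ : ∀ s ∈ I, HasDerivAt θ (θd s) s)
    (hzpos : ∀ s ∈ I, 0 < z s)
    (hode : ∀ s ∈ I, θd s = ((m - 1) * Real.cos (θ s) + n) / z s)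
    (hθ0 : θ 0 = 0) (hn : 0 ≤ n) (hm : n + 1 ≤ m) (hn1 : 1 < n + 1)
    (hmn : 0 < n + m - 1)
    (hmax : ∀ (J : Set ℝ) (θ₂ x₂ z₂ θd₂ : ℝ → ℝ),
      J.OrdConnected → IsOpen J → I ⊆ J →
      (∀ s ∈ I, θ₂ s = θ s ∧ x₂ s = x s ∧ z₂ s = z s) →
      (∀ s ∈ J, HasDerivAt x₂ (Real.cos (θ₂ s)) s ∧
        HasDerivAt z₂ (Real.sin (θ₂ s)) s ∧ HasDerivAt θ₂ (θd₂ s) s ∧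
        0 < z₂ s ∧ θd₂ s = ((m - 1) * Real.cos (θ₂ s) + n) / z₂ s) →
      J ⊆ I) :
    (∀ s ∈ I, Real.cos (θ s) ≠ -1 ∧ -π < θ s ∧ θ s < π) ∧
    StrictMonoOn z (I ∩ Ici 0) ∧
    I = Set.univ := by

  have hIconv : Convex ℝ I := hI.convex
  have hIsub : ∀ {u v : ℝ}, u ∈ I → v ∈ I → uIcc u v ⊆ I := fun hu hv => hI.uIcc_subset hu hv
  -- continuity of θ on I
  have hθc : ∀ s ∈ I, ContinuousAt θ s := fun s hs => (hθ s hs).continuousAt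
  have hzc : ∀ s ∈ I, ContinuousAt z s := fun s hs => (hz s hs).continuousAt
  set g : ℝ → ℝ := fun s => (m - 1) * Real.cos (θ s) + n with hg_def
  have hg0 : g 0 = n + m - 1 := by simp [hg_def, hθ0]; ring
  -- Step: g > 0 on I
  have gpos : ∀ s ∈ I, 0 < g s := by
    intro s₀ hs₀
    by_contra hle
    push_neg at hle
    -- IVT gives a zero of g between 0 and s₀
    have hgc : ContinuousOn g (uIcc 0 s₀) := by
      intro u hu
      exact ((((hθ u (hIsub hI0 hs₀ hu)).cos.const_mul (m-1)).add_const n).continuousAt).continuousWithinAt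
    have h0mem : (0:ℝ) ∈ uIcc (g 0) (g s₀) := by
      rw [mem_uIcc]; right; constructor
      · exact hle
      · rw [hg0]; linarith
    obtain ⟨t, htmem, hgt⟩ := intermediate_value_uIcc hgc h0mem
    have htI : t ∈ I := hIsub hI0 hs₀ htmem
    have hIcc : uIcc 0 t ⊆ I := hIsub hI0 htI
    -- bound for the coefficient on the compact interval
    set c : ℝ → ℝ := fun u => -((m - 1) * Real.sin (θ u)) / z u with hc_def
    have hcc : ContinuousOn c (uIcc 0 t) := by
      intro u hu
      exact ((((hθ u (hIcc hu)).sin.const_mul (m-1)).neg.div (hz u (hIcc hu))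
        (ne_of_gt (hzpos u (hIcc hu)))).continuousAt).continuousWithinAt
    obtain ⟨K, hK⟩ := isCompact_uIcc.exists_bound_of_continuousOn hcc
    set K₀ : ℝ := max K 0 with hK₀_def
    have hK₀ : ∀ u ∈ uIcc 0 t, |c u| ≤ K₀ := fun u hu =>
      le_trans (by simpa using hK u hu) (le_max_left _ _)
    have hK₀0 : 0 ≤ K₀ := le_max_right _ _
    set w : ℝ → ℝ → ℝ := fun u y => (max (-K₀) (min K₀ (c u))) * y with hw_def
    have hwlip : ∀ u, LipschitzOnWith K₀.toNNReal (w u) univ := by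
      intro u
      apply LipschitzOnWith.of_dist_le_mul
      intro y _ y' _
      have h1 : |max (-K₀) (min K₀ (c u))| ≤ K₀ := by
        rw [abs_le]
        exact ⟨le_max_left _ _, max_le (by linarith) (min_le_left _ _)⟩
      calc dist (w u y) (w u y') = |max (-K₀) (min K₀ (c u))| * dist y y' := by
            simp [hw_def, Real.dist_eq, ← mul_sub, abs_mul]
        _ ≤ K₀.toNNReal * dist y y' := by
            apply mul_le_mul_of_nonneg_right _ dist_nonneg
            rwa [Real.coe_toNNReal _ hK₀0]
    -- g solves the linear ODE on the interval
    have hgode : ∀ u ∈ uIcc 0 t, HasDerivAt g (w u (g u)) u := by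
      intro u hu
      have huI := hIcc hu
      have hd : HasDerivAt g ((m-1) * (-(Real.sin (θ u)) * θd u)) u :=
        ((hθ u huI).cos.const_mul (m-1)).add_const n
      convert hd using 1
      have hz0 : z u ≠ 0 := ne_of_gt (hzpos u huI)
      have hclamp : max (-K₀) (min K₀ (c u)) = c u := by
        have := hK₀ u hu
        rw [abs_le] at this
        rw [min_eq_right this.2, max_eq_right this.1]
      show (max (-K₀) (min K₀ (c u))) * g u = _
      rw [hclamp, hode u huI]
      show -((m - 1) * Real.sin (θ u)) / z u * g u
        = (m - 1) * (-(Real.sin (θ u)) * (g u / z u))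
      ring
    have hzero : ∀ u ∈ uIcc 0 t, HasDerivAt (fun _ : ℝ => (0:ℝ)) (w u 0) u := by
      intro u _
      simpa [hw_def] using (hasDerivAt_const u (0:ℝ))
    -- uniqueness: g ≡ 0 on interval, contradiction at 0
    have hg00 : g 0 = 0 := by
      rcases le_total 0 t with h0t | ht0
      · have huIcc : uIcc 0 t = Icc 0 t := uIcc_of_le h0t
        have := ODE_solution_unique_of_mem_Icc_left (v := fun u y => w u y)
          (s := fun _ => (univ : Set ℝ)) (fun u _ => hwlip u)
          (fun u hu => (hgode u (huIcc ▸ hu)).continuousAt.continuousWithinAt)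
          (fun u hu => (hgode u (huIcc ▸ Ioc_subset_Icc_self hu)).hasDerivWithinAt)
          (fun _ _ => trivial)
          (fun u hu => (hzero u (huIcc ▸ hu)).continuousAt.continuousWithinAt)
          (fun u hu => (hzero u (huIcc ▸ Ioc_subset_Icc_self hu)).hasDerivWithinAt)
          (fun _ _ => trivial) (by simpa using hgt)
        simpa using this (left_mem_Icc.mpr h0t)
      · have huIcc : uIcc 0 t = Icc t 0 := uIcc_of_ge ht0
        have := ODE_solution_unique_of_mem_Icc_right (v := fun u y => w u y)
          (s := fun _ => (univ : Set ℝ)) (fun u _ => hwlip u)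
          (fun u hu => (hgode u (huIcc ▸ hu)).continuousAt.continuousWithinAt)
          (fun u hu => (hgode u (huIcc ▸ Ico_subset_Icc_self hu)).hasDerivWithinAt)
          (fun _ _ => trivial)
          (fun u hu => (hzero u (huIcc ▸ hu)).continuousAt.continuousWithinAt)
          (fun u hu => (hzero u (huIcc ▸ Ico_subset_Icc_self hu)).hasDerivWithinAt)
          (fun _ _ => trivial) (by simpa using hgt)
        simpa using this (right_mem_Icc.mpr ht0)
    rw [hg0] at hg00
    linarith
  -- cos θ ≠ -1
  have cosne : ∀ s ∈ I, Real.cos (θ s) ≠ -1 := by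
    intro s hs hcos
    have := gpos s hs
    rw [hg_def] at this
    simp only [hcos] at this
    nlinarith [this]
  -- θ < π on I
  have θc : ∀ {u v : ℝ}, u ∈ I → ContinuousOn θ (uIcc 0 u) → True := fun _ _ => trivial
  have hθcont : ∀ s ∈ I, ContinuousOn θ (uIcc 0 s) := by
    intro s hs u hu
    exact (hθc u (hIsub hI0 hs hu)).continuousWithinAt
  have θltpi : ∀ s ∈ I, θ s < π := by
    intro s hs
    by_contra hge
    push_neg at hge
    have : π ∈ uIcc (θ 0) (θ s) := by
      rw [hθ0, mem_uIcc]
      left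
      exact ⟨Real.pi_pos.le, hge⟩
    obtain ⟨t, htmem, hθt⟩ := intermediate_value_uIcc (hθcont s hs) this
    exact cosne t (hIsub hI0 hs htmem) (by rw [hθt, Real.cos_pi])
  have θgtpi : ∀ s ∈ I, -π < θ s := by
    intro s hs
    by_contra hge
    push_neg at hge
    have : -π ∈ uIcc (θ 0) (θ s) := by
      rw [hθ0, mem_uIcc]
      right
      exact ⟨hge, by linarith [Real.pi_pos]⟩
    obtain ⟨t, htmem, hθt⟩ := intermediate_value_uIcc (hθcont s hs) this
    exact cosne t (hIsub hI0 hs htmem) (by rw [hθt, Real.cos_neg, Real.cos_pi])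
  -- θd positive, θ strictly monotone
  have θdpos : ∀ s ∈ I, 0 < θd s := by
    intro s hs
    rw [hode s hs]
    exact div_pos (gpos s hs) (hzpos s hs)
  have θmono : StrictMonoOn θ I := by
    apply strictMonoOn_of_deriv_pos hIconv
    · exact fun u hu => (hθc u hu).continuousWithinAt
    · intro u hu
      rw [hIopen.interior_eq] at hu
      rw [(hθ u hu).deriv]
      exact θdpos u hu
  have θpos : ∀ s ∈ I, 0 < s → 0 < θ s := by
    intro s hs h0s
    have := θmono hI0 hs h0s
    rwa [hθ0] at this
  have θneg : ∀ s ∈ I, s < 0 → θ s < 0 := by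
    intro s hs h0s
    have := θmono hs hI0 h0s
    rwa [hθ0] at this
  have sinpos : ∀ s ∈ I, 0 < s → 0 < Real.sin (θ s) :=
    fun s hs h0s => Real.sin_pos_of_pos_of_lt_pi (θpos s hs h0s) (θltpi s hs)
  have sinneg : ∀ s ∈ I, s < 0 → Real.sin (θ s) < 0 := by
    intro s hs h0s
    have h1 := θneg s hs h0s
    have h2 := θgtpi s hs
    have : Real.sin (θ s) = -Real.sin (-(θ s)) := by simp
    rw [this, neg_neg_iff_pos]
    exact Real.sin_pos_of_pos_of_lt_pi (by linarith) (by linarith)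
  have zcont : ∀ s ∈ I, ContinuousAt z s := hzc
  have zmono : StrictMonoOn z (I ∩ Ici 0) := by
    apply strictMonoOn_of_deriv_pos (hIconv.inter (convex_Ici 0))
    · exact fun u hu => (hzc u hu.1).continuousWithinAt
    · intro u hu
      rw [interior_inter, hIopen.interior_eq, interior_Ici] at hu
      rw [(hz u hu.1).deriv]
      exact sinpos u hu.1 hu.2
  have zanti : StrictAntiOn z (I ∩ Iic 0) := by
    apply strictAntiOn_of_deriv_neg (hIconv.inter (convex_Iic 0))
    · exact fun u hu => (hzc u hu.1).continuousWithinAt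
    · intro u hu
      rw [interior_inter, hIopen.interior_eq, interior_Iic] at hu
      rw [(hz u hu.1).deriv]
      exact sinneg u hu.1 hu.2

  -- the "old" solution as a curve in ℝ³
  set old : ℝ → ℝ × ℝ × ℝ := fun s => (θ s, x s, z s) with hold_def
  have holdder : ∀ s ∈ I, HasDerivAt old (θd s, Real.cos (θ s), Real.sin (θ s)) s :=
    fun s hs => ((hθ s hs).prodMk ((hx s hs).prodMk (hz s hs)))
  -- I is not bounded above
  have hnub : ¬ BddAbove I := by
    intro hbdd
    set b := sSup I with hb_def
    have hIb : ∀ s ∈ I, s < b := by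
      intro s hs
      rcases lt_or_eq_of_le (le_csSup hbdd hs) with h | h
      · exact h
      · exfalso
        obtain ⟨ε, hε, hball⟩ := Metric.isOpen_iff.mp hIopen s hs
        have hmem : s + ε/2 ∈ I := by
          apply hball
          rw [Metric.mem_ball, Real.dist_eq]
          rw [abs_of_nonneg (by linarith)]
          linarith
        have := le_csSup hbdd hmem
        rw [← h] at this
        linarith
    have hb0 : 0 < b := hIb 0 hI0
    obtain ⟨ε₁, hε₁, hball₁⟩ := Metric.isOpen_iff.mp hIopen 0 hI0
    set s₁ : ℝ := min (ε₁/2) (b/2) with hs₁_def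
    have hs₁pos : 0 < s₁ := lt_min (by linarith) (by linarith)
    have hs₁I : s₁ ∈ I := by
      apply hball₁
      rw [Metric.mem_ball, Real.dist_eq, sub_zero, abs_of_pos hs₁pos]
      exact lt_of_le_of_lt (min_le_left _ _) (by linarith)
    have hs₁b : s₁ < b := hIb s₁ hs₁I
    have hIoo : ∀ u, s₁ ≤ u → u < b → u ∈ I := by
      intro u h1 h2
      obtain ⟨i, hiI, hui⟩ := exists_lt_of_lt_csSup ⟨0, hI0⟩ h2
      exact hI.out hs₁I hiI ⟨h1, hui.le⟩
    set δ : ℝ := z s₁ / 2 with hδ_def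
    have hδpos : 0 < δ := half_pos (hzpos s₁ hs₁I)
    have hzδ : ∀ u, s₁ ≤ u → u < b → δ < z u := by
      intro u h1 h2
      rcases eq_or_lt_of_le h1 with h | h
      · rw [← h]; linarith [hzpos s₁ hs₁I]
      · have := zmono ⟨hs₁I, hs₁pos.le⟩ ⟨hIoo u h1 h2, le_trans hs₁pos.le h1⟩ h
        linarith
    set T : ℝ := b - s₁ + 2 with hT_def
    have hTpos : (0:ℝ) < T := by rw [hT_def]; linarith
    obtain ⟨f, hf0, hf⟩ := pvf_exists m n δ hδpos (by linarith) hn s₁ T hTpos (old s₁)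
    have hIccsub : ∀ u, s₁ ≤ u → u < b + 1 → u ∈ Ioo (s₁ - T) (s₁ + T) := by
      intro u h1 h2
      constructor <;> [linarith; (rw [hT_def]; linarith)]
    -- old solves the pvf ODE on [s₁, b)
    have holdode : ∀ u, s₁ ≤ u → u < b → HasDerivAt old (pvf m n δ (old u)) u := by
      intro u h1 h2
      have huI : u ∈ I := hIoo u h1 h2
      have h := holdder u huI
      convert h using 1
      have hmax' : max δ (z u) = z u := max_eq_right (hzδ u h1 h2).le
      have hz0 : z u ≠ 0 := ne_of_gt (hzpos u huI)
      simp only [pvf, hold_def, hmax']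
      refine Prod.ext ?_ rfl
      show ((m - 1) * Real.cos (θ u) + n) * (z u)⁻¹ = θd u
      rw [hode u huI, div_eq_mul_inv]
    -- uniqueness: f agrees with old on [s₁, b)
    obtain ⟨K, hK⟩ := pvf_lipschitz m n δ hδpos (by linarith) hn
    have hagree : ∀ u, s₁ ≤ u → u < b → f u = old u := by
      intro u h1 h2
      have hsub : Icc s₁ u ⊆ Ioo (s₁ - T) (s₁ + T) :=
        fun t ht => hIccsub t ht.1 (by linarith [ht.2])
      have := ODE_solution_unique (v := fun _ y => pvf m n δ y) (K := K) (fun _ => hK)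
        (fun t ht => (hf t (hsub ht)).continuousAt.continuousWithinAt)
        (fun t ht => (hf t (hsub (Ico_subset_Icc_self ht))).hasDerivWithinAt)
        (fun t ht => (holdode t ht.1 (by linarith [ht.2.trans_lt h2]; )).continuousAt.continuousWithinAt)
        (fun t ht => (holdode t ht.1 (lt_of_le_of_lt ht.2.le h2)).hasDerivWithinAt)
        hf0
      exact this (right_mem_Icc.mpr h1)
    -- the third coordinate of f at b is > δ
    have hfbmem : b ∈ Ioo (s₁ - T) (s₁ + T) := hIccsub b hs₁b.le (by linarith)
    have hfbc : ContinuousAt f b := (hf b hfbmem).continuousAt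
    have hfb : δ < (f b).2.2 := by
      have ht : Filter.Tendsto (fun u => (f u).2.2) (nhdsWithin b (Iio b)) (nhds ((f b).2.2)) :=
        (hfbc.snd.snd).continuousWithinAt.tendsto
      have hev : ∀ᶠ u in nhdsWithin b (Iio b), z s₁ ≤ (f u).2.2 := by
        filter_upwards [Ioo_mem_nhdsLT hs₁b] with u hu
        rw [hagree u hu.1.le hu.2]
        have := zmono ⟨hs₁I, hs₁pos.le⟩
          ⟨hIoo u hu.1.le hu.2, mem_Ici.mpr (by linarith [hu.1])⟩ hu.1
        exact this.le
      have := ge_of_tendsto ht hev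
      linarith
    -- find η
    have hfz : ContinuousAt (fun u => (f u).2.2) b := hfbc.snd.snd
    obtain ⟨η₀, hη₀, hηball⟩ := Metric.eventually_nhds_iff.mp (hfz.eventually (lt_mem_nhds hfb))
    set η : ℝ := min η₀ 1 with hη_def
    have hηpos : 0 < η := lt_min hη₀ one_pos
    have hη1 : η ≤ 1 := min_le_right _ _
    have hηδ : ∀ u, |u - b| < η → δ < (f u).2.2 :=
      fun u hu => hηball (lt_of_lt_of_le hu (min_le_left _ _))
    -- glued functions
    set F : ℝ → ℝ × ℝ × ℝ := fun s => if s < b then old s else f s with hF_def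
    have hFold : ∀ u, u < b → F u = old u := fun u hu => if_pos hu
    have hFf : ∀ u, u ∈ Ioo s₁ (b + η) → F u = f u := by
      intro u hu
      by_cases h : u < b
      · rw [hFold u h, hagree u hu.1.le h]
      · show (if u < b then old u else f u) = f u
        rw [if_neg h]
    set J : Set ℝ := I ∪ Ioo s₁ (b + η) with hJ_def
    have hJord : J.OrdConnected := by
      apply ordConnected_union hI Set.ordConnected_Ioo (w := (s₁ + b)/2)
      · exact hIoo _ (by linarith) (by linarith)
      · exact ⟨by linarith, by linarith⟩
    have hJopen : IsOpen J := hIopen.union isOpen_Ioo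
    have hJI : I ⊆ J := subset_union_left
    -- the extension satisfies the system on J
    have hsys : ∀ s ∈ J,
        HasDerivAt (fun u => (F u).2.1) (Real.cos ((F s).1)) s ∧
        HasDerivAt (fun u => (F u).2.2) (Real.sin ((F s).1)) s ∧
        HasDerivAt (fun u => (F u).1)
          (((m - 1) * Real.cos ((F s).1) + n) / (F s).2.2) s ∧
        0 < (F s).2.2 ∧
        ((fun s => ((m - 1) * Real.cos ((F s).1) + n) / (F s).2.2) s
          = ((m - 1) * Real.cos ((F s).1) + n) / (F s).2.2) := by
      intro s hs
      by_cases hsI : s ∈ I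
      · -- use original equations
        have hev : F =ᶠ[nhds s] old :=
          Filter.eventuallyEq_of_mem (Iio_mem_nhds (hIb s hsI)) (fun u hu => hFold u hu)
        have hFs : F s = old s := hFold s (hIb s hsI)
        have hθ2 : (F s).1 = θ s := by rw [hFs]
        have hz2 : (F s).2.2 = z s := by rw [hFs]
        have hevx : (fun u => (F u).2.1) =ᶠ[nhds s] x := by
          filter_upwards [Iio_mem_nhds (hIb s hsI)] with u hu
          rw [hFold u hu]
        have hevz : (fun u => (F u).2.2) =ᶠ[nhds s] z := by
          filter_upwards [Iio_mem_nhds (hIb s hsI)] with u hu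
          rw [hFold u hu]
        have hevθ : (fun u => (F u).1) =ᶠ[nhds s] θ := by
          filter_upwards [Iio_mem_nhds (hIb s hsI)] with u hu
          rw [hFold u hu]
        refine ⟨?_, ?_, ?_, ?_, rfl⟩
        · rw [hθ2]
          exact (hx s hsI).congr_of_eventuallyEq hevx
        · rw [hθ2]
          exact (hz s hsI).congr_of_eventuallyEq hevz
        · rw [hθ2, hz2, ← hode s hsI]
          exact (hθ s hsI).congr_of_eventuallyEq hevθ
        · rw [hz2]; exact hzpos s hsI
      · -- s is in the extension zone: b ≤ s < b + η
        have hs' : s ∈ Ioo s₁ (b + η) := hs.resolve_left hsI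
        have hbs : b ≤ s := by
          by_contra hlt
          push_neg at hlt
          exact hsI (hIoo s hs'.1.le hlt)
        have hsabs : |s - b| < η := by
          rw [abs_of_nonneg (by linarith)]
          linarith [hs'.2]
        have hev : F =ᶠ[nhds s] f :=
          Filter.eventuallyEq_of_mem (Ioo_mem_nhds hs'.1 hs'.2) hFf
        have hfδ : δ < (f s).2.2 := hηδ s hsabs
        have hFs : F s = f s := hFf s hs'
        have hsdom : s ∈ Ioo (s₁ - T) (s₁ + T) := by
          constructor
          · linarith [hs'.1]
          · rw [hT_def]; linarith [hs'.2, hη1]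
        have hfd := hf s hsdom
        have hmax' : max δ (f s).2.2 = (f s).2.2 := max_eq_right hfδ.le
        have h1 : (pvf m n δ (f s)).1
            = ((m - 1) * Real.cos ((F s).1) + n) / (F s).2.2 := by
          simp only [pvf, hmax', hFs]
          rw [div_eq_mul_inv]
        have h2 : (pvf m n δ (f s)).2.1 = Real.cos ((F s).1) := by
          simp only [pvf, hFs]
        have h3 : (pvf m n δ (f s)).2.2 = Real.sin ((F s).1) := by
          simp only [pvf, hFs]
        have hevx : (fun u => (F u).2.1) =ᶠ[nhds s] (fun u => (f u).2.1) := by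
          filter_upwards [Ioo_mem_nhds hs'.1 hs'.2] with u hu
          rw [hFf u hu]
        have hevz : (fun u => (F u).2.2) =ᶠ[nhds s] (fun u => (f u).2.2) := by
          filter_upwards [Ioo_mem_nhds hs'.1 hs'.2] with u hu
          rw [hFf u hu]
        have hevθ : (fun u => (F u).1) =ᶠ[nhds s] (fun u => (f u).1) := by
          filter_upwards [Ioo_mem_nhds hs'.1 hs'.2] with u hu
          rw [hFf u hu]
        refine ⟨?_, ?_, ?_, ?_, rfl⟩
        · rw [← h2]
          exact (hasDerivAt_snd3 hfd).congr_of_eventuallyEq hevx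
        · rw [← h3]
          exact (hasDerivAt_trd3 hfd).congr_of_eventuallyEq hevz
        · rw [← h1]
          exact (hasDerivAt_fst3 hfd).congr_of_eventuallyEq hevθ
        · show 0 < (F s).2.2
          rw [hFs]
          exact lt_trans hδpos hfδ
    have hagreeI : ∀ s ∈ I, (fun u => (F u).1) s = θ s ∧
        (fun u => (F u).2.1) s = x s ∧ (fun u => (F u).2.2) s = z s := by
      intro s hsI
      have hFs : F s = old s := hFold s (hIb s hsI)
      refine ⟨?_, ?_, ?_⟩
      · show (F s).1 = θ s
        rw [hFs]
      · show (F s).2.1 = x s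
        rw [hFs]
      · show (F s).2.2 = z s
        rw [hFs]
    have hJsub := hmax J (fun u => (F u).1) (fun u => (F u).2.1) (fun u => (F u).2.2)
      (fun s => ((m - 1) * Real.cos ((F s).1) + n) / (F s).2.2)
      hJord hJopen hJI hagreeI
      (fun s hs => ⟨(hsys s hs).1, (hsys s hs).2.1, (hsys s hs).2.2.1,
        (hsys s hs).2.2.2.1, rfl⟩)
    have hbJ : b ∈ J := Or.inr ⟨hs₁b, by linarith⟩
    exact absurd (hIb b (hJsub hbJ)) (lt_irrefl b)
  -- I is not bounded below
  have hnlb : ¬ BddBelow I := by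
    intro hbdd
    set a := sInf I with ha_def
    have hIa : ∀ s ∈ I, a < s := by
      intro s hs
      rcases lt_or_eq_of_le (csInf_le hbdd hs) with h | h
      · exact h
      · exfalso
        obtain ⟨ε, hε, hball⟩ := Metric.isOpen_iff.mp hIopen s hs
        have hmem : s - ε/2 ∈ I := by
          apply hball
          rw [Metric.mem_ball, Real.dist_eq]
          rw [abs_of_nonpos (by linarith)]
          linarith
        have := csInf_le hbdd hmem
        rw [h] at this
        linarith
    have ha0 : a < 0 := hIa 0 hI0
    have hIoo : ∀ u, a < u → u ≤ 0 → u ∈ I := by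
      intro u h1 h2
      obtain ⟨i, hiI, hui⟩ := exists_lt_of_csInf_lt ⟨0, hI0⟩ h1
      exact hI.out hiI hI0 ⟨hui.le, h2⟩
    set δ : ℝ := z 0 / 2 with hδ_def
    have hδpos : 0 < δ := half_pos (hzpos 0 hI0)
    have hzδ : ∀ u, a < u → u ≤ 0 → δ < z u := by
      intro u h1 h2
      rcases eq_or_lt_of_le h2 with h | h
      · rw [h]; linarith [hzpos 0 hI0]
      · have := zanti ⟨hIoo u h1 h2, h2⟩ ⟨hI0, mem_Iic.mpr le_rfl⟩ h
        linarith
    set T : ℝ := 0 - a + 2 with hT_def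
    have hTpos : (0:ℝ) < T := by rw [hT_def]; linarith
    obtain ⟨f, hf0, hf⟩ := pvf_exists m n δ hδpos (by linarith) hn 0 T hTpos (old 0)
    have hIccsub : ∀ u, a - 1 < u → u ≤ 0 → u ∈ Ioo (0 - T) (0 + T) := by
      intro u h1 h2
      constructor <;> [(rw [hT_def]; linarith); linarith]
    -- old solves the pvf ODE on (a, 0]
    have holdode : ∀ u, a < u → u ≤ 0 → HasDerivAt old (pvf m n δ (old u)) u := by
      intro u h1 h2
      have huI : u ∈ I := hIoo u h1 h2
      have h := holdder u huI
      convert h using 1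
      have hmax' : max δ (z u) = z u := max_eq_right (hzδ u h1 h2).le
      simp only [pvf, hold_def, hmax']
      refine Prod.ext ?_ rfl
      show ((m - 1) * Real.cos (θ u) + n) * (z u)⁻¹ = θd u
      rw [hode u huI, div_eq_mul_inv]
    obtain ⟨K, hK⟩ := pvf_lipschitz m n δ hδpos (by linarith) hn
    -- backward uniqueness: f agrees with old on (a, 0]
    have hagree : ∀ u, a < u → u ≤ 0 → f u = old u := by
      intro u h1 h2
      have hsub : Icc u 0 ⊆ Ioo (0 - T) (0 + T) :=
        fun t ht => hIccsub t (by linarith [ht.1]) ht.2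
      have := ODE_solution_unique_of_mem_Icc_left (v := fun _ y => pvf m n δ y)
        (s := fun _ => (univ : Set (ℝ × ℝ × ℝ))) (fun _ _ => hK.lipschitzOnWith)
        (fun t ht => (hf t (hsub ht)).continuousAt.continuousWithinAt)
        (fun t ht => (hf t (hsub (Ioc_subset_Icc_self ht))).hasDerivWithinAt)
        (fun _ _ => trivial)
        (fun t ht => (holdode t (lt_of_lt_of_le h1 ht.1) ht.2).continuousAt.continuousWithinAt)
        (fun t ht => (holdode t (lt_trans h1 ht.1) ht.2).hasDerivWithinAt)
        (fun _ _ => trivial)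
        hf0
      exact this (left_mem_Icc.mpr h2)
    have hfamem : a ∈ Ioo (0 - T) (0 + T) := hIccsub a (by linarith) ha0.le
    have hfac : ContinuousAt f a := (hf a hfamem).continuousAt
    have hfa : δ < (f a).2.2 := by
      have ht : Filter.Tendsto (fun u => (f u).2.2) (nhdsWithin a (Ioi a)) (nhds ((f a).2.2)) :=
        (hfac.snd.snd).continuousWithinAt.tendsto
      have hev : ∀ᶠ u in nhdsWithin a (Ioi a), z 0 ≤ (f u).2.2 := by
        filter_upwards [Ioo_mem_nhdsGT ha0] with u hu
        rw [hagree u hu.1 hu.2.le]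
        rcases eq_or_lt_of_le hu.2.le with h | h
        · show z 0 ≤ z u
          rw [h]
        · have := zanti ⟨hIoo u hu.1 hu.2.le, hu.2.le⟩ ⟨hI0, mem_Iic.mpr le_rfl⟩ h
          exact this.le
      have := ge_of_tendsto ht hev
      linarith
    have hfz : ContinuousAt (fun u => (f u).2.2) a := hfac.snd.snd
    obtain ⟨η₀, hη₀, hηball⟩ := Metric.eventually_nhds_iff.mp (hfz.eventually (lt_mem_nhds hfa))
    set η : ℝ := min η₀ 1 with hη_def
    have hηpos : 0 < η := lt_min hη₀ one_pos
    have hη1 : η ≤ 1 := min_le_right _ _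
    have hηδ : ∀ u, |u - a| < η → δ < (f u).2.2 :=
      fun u hu => hηball (lt_of_lt_of_le hu (min_le_left _ _))
    set F : ℝ → ℝ × ℝ × ℝ := fun s => if a < s then old s else f s with hF_def
    have hFold : ∀ u, a < u → F u = old u := fun u hu => if_pos hu
    have hFf : ∀ u, u ∈ Ioo (a - η) 0 → F u = f u := by
      intro u hu
      by_cases h : a < u
      · rw [hFold u h, hagree u h hu.2.le]
      · show (if a < u then old u else f u) = f u
        rw [if_neg h]
    set J : Set ℝ := I ∪ Ioo (a - η) 0 with hJ_def
    have hJord : J.OrdConnected := by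
      apply ordConnected_union hI Set.ordConnected_Ioo (w := a/2)
      · exact hIoo _ (by linarith) (by linarith)
      · exact ⟨by linarith, by linarith⟩
    have hJopen : IsOpen J := hIopen.union isOpen_Ioo
    have hJI : I ⊆ J := subset_union_left
    have hsys : ∀ s ∈ J,
        HasDerivAt (fun u => (F u).2.1) (Real.cos ((F s).1)) s ∧
        HasDerivAt (fun u => (F u).2.2) (Real.sin ((F s).1)) s ∧
        HasDerivAt (fun u => (F u).1)
          (((m - 1) * Real.cos ((F s).1) + n) / (F s).2.2) s ∧
        0 < (F s).2.2 := by
      intro s hs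
      by_cases hsI : s ∈ I
      · have hFs : F s = old s := hFold s (hIa s hsI)
        have hθ2 : (F s).1 = θ s := by rw [hFs]
        have hz2 : (F s).2.2 = z s := by rw [hFs]
        have hevx : (fun u => (F u).2.1) =ᶠ[nhds s] x := by
          filter_upwards [Ioi_mem_nhds (hIa s hsI)] with u hu
          rw [hFold u hu]
        have hevz : (fun u => (F u).2.2) =ᶠ[nhds s] z := by
          filter_upwards [Ioi_mem_nhds (hIa s hsI)] with u hu
          rw [hFold u hu]
        have hevθ : (fun u => (F u).1) =ᶠ[nhds s] θ := by
          filter_upwards [Ioi_mem_nhds (hIa s hsI)] with u hu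
          rw [hFold u hu]
        refine ⟨?_, ?_, ?_, ?_⟩
        · rw [hθ2]
          exact (hx s hsI).congr_of_eventuallyEq hevx
        · rw [hθ2]
          exact (hz s hsI).congr_of_eventuallyEq hevz
        · rw [hθ2, hz2, ← hode s hsI]
          exact (hθ s hsI).congr_of_eventuallyEq hevθ
        · rw [hz2]; exact hzpos s hsI
      · have hs' : s ∈ Ioo (a - η) 0 := hs.resolve_left hsI
        have hbs : s ≤ a := by
          by_contra hlt
          push_neg at hlt
          exact hsI (hIoo s hlt hs'.2.le)
        have hsabs : |s - a| < η := by
          rw [abs_of_nonpos (by linarith)]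
          linarith [hs'.1]
        have hfδ : δ < (f s).2.2 := hηδ s hsabs
        have hFs : F s = f s := hFf s hs'
        have hsdom : s ∈ Ioo (0 - T) (0 + T) := by
          constructor
          · rw [hT_def]; linarith [hs'.1, hη1]
          · linarith [hs'.2]
        have hfd := hf s hsdom
        have hmax' : max δ (f s).2.2 = (f s).2.2 := max_eq_right hfδ.le
        have h1 : (pvf m n δ (f s)).1
            = ((m - 1) * Real.cos ((F s).1) + n) / (F s).2.2 := by
          simp only [pvf, hmax', hFs]
          rw [div_eq_mul_inv]
        have h2 : (pvf m n δ (f s)).2.1 = Real.cos ((F s).1) := by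
          simp only [pvf, hFs]
        have h3 : (pvf m n δ (f s)).2.2 = Real.sin ((F s).1) := by
          simp only [pvf, hFs]
        have hevx : (fun u => (F u).2.1) =ᶠ[nhds s] (fun u => (f u).2.1) := by
          filter_upwards [Ioo_mem_nhds hs'.1 hs'.2] with u hu
          rw [hFf u hu]
        have hevz : (fun u => (F u).2.2) =ᶠ[nhds s] (fun u => (f u).2.2) := by
          filter_upwards [Ioo_mem_nhds hs'.1 hs'.2] with u hu
          rw [hFf u hu]
        have hevθ : (fun u => (F u).1) =ᶠ[nhds s] (fun u => (f u).1) := by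
          filter_upwards [Ioo_mem_nhds hs'.1 hs'.2] with u hu
          rw [hFf u hu]
        refine ⟨?_, ?_, ?_, ?_⟩
        · rw [← h2]
          exact (hasDerivAt_snd3 hfd).congr_of_eventuallyEq hevx
        · rw [← h3]
          exact (hasDerivAt_trd3 hfd).congr_of_eventuallyEq hevz
        · rw [← h1]
          exact (hasDerivAt_fst3 hfd).congr_of_eventuallyEq hevθ
        · show 0 < (F s).2.2
          rw [hFs]
          exact lt_trans hδpos hfδ
    have hagreeI : ∀ s ∈ I, (fun u => (F u).1) s = θ s ∧
        (fun u => (F u).2.1) s = x s ∧ (fun u => (F u).2.2) s = z s := by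
      intro s hsI
      have hFs : F s = old s := hFold s (hIa s hsI)
      refine ⟨?_, ?_, ?_⟩
      · show (F s).1 = θ s
        rw [hFs]
      · show (F s).2.1 = x s
        rw [hFs]
      · show (F s).2.2 = z s
        rw [hFs]
    have hJsub := hmax J (fun u => (F u).1) (fun u => (F u).2.1) (fun u => (F u).2.2)
      (fun s => ((m - 1) * Real.cos ((F s).1) + n) / (F s).2.2)
      hJord hJopen hJI hagreeI
      (fun s hs => ⟨(hsys s hs).1, (hsys s hs).2.1, (hsys s hs).2.2.1,
        (hsys s hs).2.2.2, rfl⟩)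
    have haJ : a ∈ J := Or.inr ⟨by linarith, ha0⟩
    exact absurd (hIa a (hJsub haJ)) (lt_irrefl a)
  -- conclusion
  have hIuniv : I = Set.univ := by
    rw [Set.eq_univ_iff_forall]
    intro u
    obtain ⟨i, hiI, hui⟩ := not_bddAbove_iff.mp hnub u
    obtain ⟨j, hjI, hju⟩ := not_bddBelow_iff.mp hnlb u
    exact hI.out hjI hiI ⟨hju.le, hui.le⟩
  refine ⟨fun s hs => ⟨cosne s hs, θgtpi s hs, θltpi s hs⟩, zmono, hIuniv⟩
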